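/- Let δ₂ = k_min/k̄. Then the stationary point of the graph mean field model satisfies the lower bound s_{k,i}* ≥ (((1+δ₂)/2)·(x_cλ/μ))^(2^i − 1) for all k ∈ K and i ≥ 0. -/

import Mathlib

open Finset Filter

/-- `zfun K p kbar s k i` is the quantity `z_{k,i+1}(s)` of the graph mean field model:
`(1/2) * Σ_{k'∈K} ((k'+k)/k̄) p(k') (s_{k',i} + s_{k',i+1})`. -/
noncomputable def zfun (K : Finset ℕ) (p : ℕ → ℝ) (kbar : ℝ) (s : ℕ → ℕ → ℝ) (k i : ℕ) : ℝ :=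
  (1/2) * ∑ k' ∈ K, (((k' : ℝ) + (k : ℝ)) / kbar) * p k' * (s k' i + s k' (i+1))

/-- Lower bound on the stationary point by the deflated classical Po2 expression:
with `δ₂ = k_min/k̄`, `s_{k,i}* ≥ (((1+δ₂)/2)(x_cλ/μ))^(2^i - 1)`. -/
theorem stationary_point_lower_bound (K : Finset ℕ) (p : ℕ → ℝ)
    (hp : ∀ k ∈ K, 0 ≤ p k) (hpsum : ∑ k ∈ K, p k = 1)
    (kbar : ℝ) (hkbar : kbar = ∑ k ∈ K, p k * (k : ℝ)) (hkpos : 0 < kbar)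
    (kmin : ℕ) (hkminmem : kmin ∈ K) (hkmin : ∀ k ∈ K, kmin ≤ k)
    (xcl mu : ℝ) (hx : 0 < xcl) (hmu : 0 < mu) (hxmu : xcl / mu < 1)
    (s : ℕ → ℕ → ℝ)
    (hs0 : ∀ k, s k 0 = 1) (hmono : ∀ k i, s k (i+1) ≤ s k i)
    (hnn : ∀ k i, 0 ≤ s k i)
    (hlim : ∀ k ∈ K, Filter.Tendsto (fun i => s k i) Filter.atTop (nhds 0))
    (hdegmono : ∀ k ∈ K, ∀ i : ℕ, s kmin i ≤ s k i)
    (hstat : ∀ k ∈ K, ∀ i : ℕ,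
      xcl * (s k i - s k (i+1)) * zfun K p kbar s k i = mu * (s k (i+1) - s k (i+2))) :
    ∀ k ∈ K, ∀ i : ℕ,
      ((1 + (kmin : ℝ) / kbar) / 2 * (xcl / mu)) ^ (2 ^ i - 1) ≤ s k i := by
  set δ : ℝ := (kmin : ℝ) / kbar with hδ
  set c : ℝ := (1 + δ) / 2 * (xcl / mu) with hc
  have hδnn : 0 ≤ δ := div_nonneg (Nat.cast_nonneg _) hkpos.le
  have hcpos : 0 < c := by
    apply mul_pos
    · linarith
    · exact div_pos hx hmu
  -- sum of coefficients
  have hsum : ∑ k' ∈ K, (((k' : ℝ) + (kmin : ℝ)) / kbar) * p k' = 1 + δ := by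
    have h1 : ∑ k' ∈ K, (((k' : ℝ) + (kmin : ℝ)) / kbar) * p k'
        = ((∑ k' ∈ K, p k' * (k' : ℝ)) + (kmin : ℝ) * (∑ k' ∈ K, p k')) / kbar := by
      rw [Finset.mul_sum, ← Finset.sum_add_distrib, Finset.sum_div]
      apply Finset.sum_congr rfl
      intro k' _
      field_simp
    rw [h1, ← hkbar, hpsum, hδ]
    field_simp
  -- lower bound on zfun at kmin
  have hz : ∀ j, (1 + δ) / 2 * (s kmin j + s kmin (j+1)) ≤ zfun K p kbar s kmin j := by
    intro j
    unfold zfun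
    have h1 : ∑ k' ∈ K, (((k' : ℝ) + (kmin : ℝ)) / kbar) * p k' * (s kmin j + s kmin (j+1))
        ≤ ∑ k' ∈ K, (((k' : ℝ) + (kmin : ℝ)) / kbar) * p k' * (s k' j + s k' (j+1)) := by
      apply Finset.sum_le_sum
      intro k' hk'
      apply mul_le_mul_of_nonneg_left
      · exact add_le_add (hdegmono k' hk' j) (hdegmono k' hk' (j+1))
      · exact mul_nonneg (div_nonneg (by positivity) hkpos.le) (hp k' hk')
    have h2 : ∑ k' ∈ K, (((k' : ℝ) + (kmin : ℝ)) / kbar) * p k' * (s kmin j + s kmin (j+1))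
        = (1 + δ) * (s kmin j + s kmin (j+1)) := by
      rw [← Finset.sum_mul, hsum]
    nlinarith [h1, h2]
  -- the function f is antitone and tends to 0
  set C : ℝ := c * mu with hC
  have hCx : C = xcl * ((1 + δ) / 2) := by
    rw [hC, hc]; field_simp
  set f : ℕ → ℝ := fun j => mu * s kmin (j+1) - C * (s kmin j)^2 with hf
  have hstep : ∀ j, f (j+1) ≤ f j := by
    intro j
    have heq := hstat kmin hkminmem j
    have hzj := hz j
    have hmj := hmono kmin j
    have hd : 0 ≤ s kmin j - s kmin (j+1) := by linarith
    have hkey : C * ((s kmin j)^2 - (s kmin (j+1))^2)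
        ≤ xcl * (s kmin j - s kmin (j+1)) * zfun K p kbar s kmin j := by
      have : C * ((s kmin j)^2 - (s kmin (j+1))^2)
          = xcl * (s kmin j - s kmin (j+1)) * ((1 + δ) / 2 * (s kmin j + s kmin (j+1))) := by
        rw [hCx]; ring
      rw [this]
      apply mul_le_mul_of_nonneg_left hzj
      exact mul_nonneg hx.le hd
    rw [heq] at hkey
    simp only [hf]
    nlinarith [hkey]
  have hanti : ∀ i j, i ≤ j → f j ≤ f i := by
    intro i j hij
    induction j with
    | zero => simp [Nat.le_zero.mp hij]
    | succ j ih =>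
      rcases Nat.lt_or_ge i (j+1) with h | h
      · exact le_trans (hstep j) (ih (Nat.lt_succ_iff.mp h))
      · have : i = j + 1 := le_antisymm hij h
        simp [this]
  have hlimmin := hlim kmin hkminmem
  have hshift : Tendsto (fun j => s kmin (j+1)) atTop (nhds 0) :=
    hlimmin.comp (tendsto_add_atTop_nat 1)
  have hf0 : Tendsto f atTop (nhds 0) := by
    have : Tendsto f atTop (nhds (mu * 0 - C * 0^2)) := by
      apply Tendsto.sub
      · exact hshift.const_mul mu
      · exact (hlimmin.pow 2).const_mul C
    simpa using this
  have hfge : ∀ i, 0 ≤ f i := by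
    intro i
    apply le_of_tendsto hf0
    filter_upwards [eventually_ge_atTop i] with j hj
    exact hanti i j hj
  have hrec : ∀ i, c * (s kmin i)^2 ≤ s kmin (i+1) := by
    intro i
    have := hfge i
    simp only [hf, hC] at this
    nlinarith [this]
  have hmin : ∀ i, c ^ (2 ^ i - 1) ≤ s kmin i := by
    intro i
    induction i with
    | zero => simp [hs0]
    | succ i ih =>
      have h2i : 1 ≤ 2 ^ i := Nat.one_le_two_pow
      have hexp : 2 ^ (i+1) - 1 = 2 * (2 ^ i - 1) + 1 := by
        have : 2 ^ (i+1) = 2 * 2 ^ i := by rw [pow_succ]; ring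
        omega
      have hsq : (c ^ (2 ^ i - 1))^2 ≤ (s kmin i)^2 :=
        pow_le_pow_left₀ (by positivity) ih 2
      calc c ^ (2 ^ (i+1) - 1) = c * (c ^ (2 ^ i - 1))^2 := by
            rw [hexp, ← pow_mul, pow_succ]; ring
        _ ≤ c * (s kmin i)^2 := by
            apply mul_le_mul_of_nonneg_left hsq hcpos.le
        _ ≤ s kmin (i+1) := hrec i
  intro k hk i
  exact le_trans (hmin i) (hdegmono k hk i)
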